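/- Let G be a graph, v an outer vertex, and e an inner edge adjacent to v, with w the vertex at the other end of e, so that contracting e merges v and w into a single vertex u of G/e. Then the outer face (G/e)/u exists if and only if (G/v)/w exists; in that case (G/e)/u = (G/v)/w, and the square commutes: δ^e ∘ δ^u = δ^v ∘ δ^w as graphical maps (G/e)/u → G. -/

import Mathlib

/-!  A formalization of the graphical category of finite (connected) multigraphs
with legs, loops and parallel edges, following the half-edge encoding:
a graph is given by a finite set of vertices, a finite set of half-edges,
an involution pairing the two halves of an edge (legs and free edges have a
fixed or unattached half), and an attachment map.  Graphical maps are encoded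
by their action on (half-)edges together with the assignment of an embedded
subgraph (given by its vertex set and its ι-closed set of half-edges) to each
vertex; `PreGMap.EqOn G f g` is equality of graphical maps out of `G`. -/

structure LegGraph where
  V : Finset ℕ
  H : Finset ℕ
  ι : ℕ → ℕ
  att : ℕ → Option ℕ

namespace LegGraph

/-- Two vertices are adjacent when some edge joins them. -/
def Adj (G : LegGraph) (v w : ℕ) : Prop :=
  ∃ h ∈ G.H, G.att h = some v ∧ G.att (G.ι h) = some w

/-- Connectedness of a graph. -/
def Connected (G : LegGraph) : Prop :=
  ∀ v ∈ G.V, ∀ w ∈ G.V, Relation.ReflTransGen G.Adj v w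

/-- Well-formedness: the involution and the attachment are internal to the
graph, and the graph is connected (graphs are finite connected multigraphs). -/
def Wf (G : LegGraph) : Prop :=
  (∀ h ∈ G.H, G.ι h ∈ G.H) ∧
  (∀ h ∈ G.H, G.ι (G.ι h) = h) ∧
  (∀ h ∈ G.H, ∀ v, G.att h = some v → v ∈ G.V) ∧
  G.Connected

/-- `h` is (a half of) an inner edge: both ends are attached to vertices. -/
def IsInnerEdge (G : LegGraph) (h : ℕ) : Prop :=
  h ∈ G.H ∧ h ≠ G.ι h ∧ (G.att h).isSome ∧ (G.att (G.ι h)).isSome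

/-- `h` is (a half of) a loop: an edge from a vertex to itself. -/
def IsLoop (G : LegGraph) (h : ℕ) : Prop :=
  h ∈ G.H ∧ h ≠ G.ι h ∧ ∃ v, G.att h = some v ∧ G.att (G.ι h) = some v

/-- The number of non-leg edges incident to `v` (a loop counts once). -/
def nonLegEdgeCount (G : LegGraph) (v : ℕ) : ℕ :=
  (G.H.filter fun h => G.att h = some v ∧ (G.att (G.ι h)).isSome ∧ G.att (G.ι h) ≠ some v).card +
  (G.H.filter fun h => G.att h = some v ∧ G.att (G.ι h) = some v ∧ h ≠ G.ι h).card / 2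

/-- An outer vertex: at most one incident non-leg edge. -/
def IsOuterVertex (G : LegGraph) (v : ℕ) : Prop :=
  v ∈ G.V ∧ G.nonLegEdgeCount v ≤ 1

/-- The corolla at `v`, as an embedded subgraph (vertex set and half-edges). -/
def corolla (G : LegGraph) (v : ℕ) : Finset ℕ × Finset ℕ :=
  ({v}, G.H.filter fun h => G.att h = some v ∨ G.att (G.ι h) = some v)

/-- `G/b`: contract the (non-loop) inner edge `b`, merging its two endpoints
into the single vertex `min x y`. -/
def contract (G : LegGraph) (b : ℕ) : LegGraph :=
  let x := (G.att b).getD 0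
  let y := (G.att (G.ι b)).getD 0
  let z := min x y
  let H' := G.H.filter fun h => h ≠ b ∧ h ≠ G.ι b
  { V := insert z ((G.V.erase x).erase y)
    H := H'
    ι := fun h => if h ∈ H' then G.ι h else h
    att := fun h => if h ∈ H' then
        (if G.att h = some x ∨ G.att h = some y then some z else G.att h) else none }

/-- `G/v`: delete the (outer) vertex `v` together with its legs and loops;
edges joining `v` to other vertices become legs. -/
def delVertex (G : LegGraph) (v : ℕ) : LegGraph :=
  let H' := G.H.filter fun h =>
    ¬ ((G.att h = some v ∨ G.att (G.ι h) = some v) ∧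
       (G.att h = some v ∨ G.att h = none) ∧
       (G.att (G.ι h) = some v ∨ G.att (G.ι h) = none))
  { V := G.V.erase v
    H := H'
    ι := fun h => if h ∈ H' then G.ι h else h
    att := fun h => if h ∈ H' then (if G.att h = some v then none else G.att h) else none }

/-- `G/ℓ`: snip the loop (or cut the edge) `l` into two legs, with fresh
half-edges `a` and `b` as the new free ends. -/
def snip (G : LegGraph) (l a b : ℕ) : LegGraph :=
  let H' := insert a (insert b G.H)
  { V := G.V
    H := H'
    ι := fun h => if h ∈ H' then
        (if h = l then a else if h = a then l else
         if h = G.ι l then b else if h = b then G.ι l else G.ι h) else h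
    att := fun h => if h ∈ H' then (if h = a ∨ h = b then none else G.att h) else none }

/-- `G_b`: subdivide the edge `b` by one new bivalent vertex `u`,
splitting `b` into the two edges `{b, n₁}` and `{n₂, ι b}`. -/
def subdiv (G : LegGraph) (b u n₁ n₂ : ℕ) : LegGraph :=
  let H' := insert n₁ (insert n₂ G.H)
  { V := insert u G.V
    H := H'
    ι := fun h => if h ∈ H' then
        (if h = b then n₁ else if h = n₁ then b else
         if h = n₂ then (if G.ι b = b then n₂ else G.ι b) else
         if h = G.ι b then n₂ else G.ι h) else h
    att := fun h => if h ∈ H' then (if h = n₁ ∨ h = n₂ then some u else G.att h) else none }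

/-- Validity of the data of a subdivision: `b` is an edge and the new names are fresh. -/
def IsDegen (G : LegGraph) (b u n₁ n₂ : ℕ) : Prop :=
  b ∈ G.H ∧ u ∉ G.V ∧ n₁ ∉ G.H ∧ n₂ ∉ G.H ∧ n₁ ≠ n₂

end LegGraph

/-- The data of a graphical map: a map on half-edges (inducing the map `f₀` on
edges) and, for each vertex, an embedded subgraph of the target
(its vertex set together with its set of half-edges). -/
structure PreGMap where
  e : ℕ → ℕ
  vimg : ℕ → Finset ℕ × Finset ℕ

/-- Composition of graphical maps: compose on edges; the embedded subgraph at a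
vertex is assembled by substituting the images of the vertices of its image. -/
def PreGMap.comp (g f : PreGMap) : PreGMap where
  e := g.e ∘ f.e
  vimg := fun v =>
    ((f.vimg v).1.biUnion fun w => (g.vimg w).1,
     (f.vimg v).2.image g.e ∪ (f.vimg v).1.biUnion fun w => (g.vimg w).2)

/-- Equality of graphical maps out of `G` (extensional equality of `f₀` and `f₁`). -/
def PreGMap.EqOn (G : LegGraph) (f g : PreGMap) : Prop :=
  (∀ h ∈ G.H, f.e h = g.e h) ∧ ∀ v ∈ G.V, f.vimg v = g.vimg v

namespace LegGraph

/-- The identity graphical map of `G`. -/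
def idMap (G : LegGraph) : PreGMap := ⟨id, G.corolla⟩

/-- The inner coface map `δ^b : G/b → G`: identity on edges, sending the merged
vertex to the embedded barbell subgraph of `G` around `b`, and every other
vertex to its corolla. -/
def innerCoface (G : LegGraph) (b : ℕ) : PreGMap :=
  let x := (G.att b).getD 0
  let y := (G.att (G.ι b)).getD 0
  { e := id
    vimg := fun v => if v = min x y then
        ({x, y}, G.H.filter fun h =>
          G.att h = some x ∨ G.att h = some y ∨
          G.att (G.ι h) = some x ∨ G.att (G.ι h) = some y)
      else G.corolla v }

/-- The outer coface map `δ^v : G/v → G`: identity on edges, every vertex to its corolla. -/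
def outerCoface (G : LegGraph) (_v : ℕ) : PreGMap := ⟨id, G.corolla⟩

/-- The cosnip map `δ^ℓ : G/ℓ → G`: both new legs are sent to the loop `l`,
identity on vertices. -/
def cosnip (G : LegGraph) (l a b : ℕ) : PreGMap :=
  { e := fun h => if h = a then G.ι l else if h = b then l else h
    vimg := G.corolla }

/-- The codegeneracy map `σ^b : G_b → G`: the two halves of the subdivided edge
are sent to `b`, the new bivalent vertex to the edge graph `η_b`, and every
other vertex to its corolla. -/
def codegeneracy (G : LegGraph) (b u n₁ n₂ : ℕ) : PreGMap :=
  { e := fun h => if h = n₁ then G.ι b else if h = n₂ then b else h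
    vimg := fun v => if v = u then ((∅ : Finset ℕ), ({b, G.ι b} : Finset ℕ))
      else G.corolla v }

/-- The conditions for `f` to be a graphical map `G → G'`: it maps edges to
edges, each vertex to an embedded subgraph of `G'`, the vertex sets of the
images are disjoint and together exhaust the vertices of `G'`, and boundaries
match: each half-edge at `v` is sent into the subgraph at `v`. -/
def IsGMap (G G' : LegGraph) (f : PreGMap) : Prop :=
  (∀ h ∈ G.H, f.e h ∈ G'.H ∧ (f.e (G.ι h) = f.e h ∨ f.e (G.ι h) = G'.ι (f.e h))) ∧
  (∀ v ∈ G.V, (f.vimg v).1 ⊆ G'.V ∧ (f.vimg v).2 ⊆ G'.H) ∧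
  (∀ v ∈ G.V, ∀ w ∈ G.V, v ≠ w → Disjoint (f.vimg v).1 (f.vimg w).1) ∧
  G.V.biUnion (fun v => (f.vimg v).1) = G'.V ∧
  (∀ v ∈ G.V, ∀ h ∈ G.H, G.att h = some v → f.e h ∈ (f.vimg v).2)

end LegGraph

/-- The three kinds of coface maps: inner cofaces, outer cofaces, and cosnips. -/
inductive CofaceKind where
  | inner (e : ℕ)
  | outer (v : ℕ)
  | snip (l a b : ℕ)

namespace LegGraph

/-- The source of the coface map of kind `k` into `G`. -/
def cofaceSource (G : LegGraph) : CofaceKind → LegGraph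
  | .inner e => G.contract e
  | .outer v => G.delVertex v
  | .snip l a b => G.snip l a b

/-- The coface map of kind `k` into `G`. -/
def cofaceMap (G : LegGraph) : CofaceKind → PreGMap
  | .inner e => G.innerCoface e
  | .outer v => G.outerCoface v
  | .snip l a b => G.cosnip l a b

/-- Validity of a coface map into `G`: inner cofaces contract non-loop inner
edges, outer cofaces delete outer vertices, cosnips snip loops (with fresh
names, leaving the graph connected). -/
def IsCoface (G : LegGraph) : CofaceKind → Prop
  | .inner e => G.IsInnerEdge e ∧ ¬ G.IsLoop e
  | .outer v => G.IsOuterVertex v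
  | .snip l a b => G.IsLoop l ∧ a ∉ G.H ∧ b ∉ G.H ∧ a ≠ b ∧ (G.snip l a b).Connected

end LegGraph

/-- `CofaceSeq G₁ G₂ f`: `f : G₁ → G₂` is a composite of a sequence of coface maps. -/
inductive CofaceSeq : LegGraph → LegGraph → PreGMap → Prop where
  | nil (G : LegGraph) : CofaceSeq G G G.idMap
  | cons {G₁ G₂ : LegGraph} {f : PreGMap} (k : CofaceKind) (hk : G₂.IsCoface k)
      (h : CofaceSeq G₁ (G₂.cofaceSource k) f) :
      CofaceSeq G₁ G₂ ((G₂.cofaceMap k).comp f)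

/-- `DegenSeq G₁ G₂ f`: `f : G₁ → G₂` is a composite of a sequence of codegeneracy maps. -/
inductive DegenSeq : LegGraph → LegGraph → PreGMap → Prop where
  | nil (G : LegGraph) : DegenSeq G G G.idMap
  | cons {G₁ G₂ : LegGraph} {f : PreGMap} (b u n₁ n₂ : ℕ) (hb : G₂.IsDegen b u n₁ n₂)
      (h : DegenSeq G₁ (G₂.subdiv b u n₁ n₂) f) :
      DegenSeq G₁ G₂ ((G₂.codegeneracy b u n₁ n₂).comp f)

/-- `ElemSeq G₁ G₂ f`: `f : G₁ → G₂` is an arbitrary composite of coface and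
codegeneracy maps. -/
inductive ElemSeq : LegGraph → LegGraph → PreGMap → Prop where
  | nil (G : LegGraph) : ElemSeq G G G.idMap
  | coface {G₁ G₂ : LegGraph} {f : PreGMap} (k : CofaceKind) (hk : G₂.IsCoface k)
      (h : ElemSeq G₁ (G₂.cofaceSource k) f) :
      ElemSeq G₁ G₂ ((G₂.cofaceMap k).comp f)
  | degen {G₁ G₂ : LegGraph} {f : PreGMap} (b u n₁ n₂ : ℕ) (hb : G₂.IsDegen b u n₁ n₂)
      (h : ElemSeq G₁ (G₂.subdiv b u n₁ n₂) f) :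
      ElemSeq G₁ G₂ ((G₂.codegeneracy b u n₁ n₂).comp f)


private lemma graph_ext {G₁ G₂ : LegGraph} (h1 : G₁.V = G₂.V) (h2 : G₁.H = G₂.H)
    (h3 : G₁.ι = G₂.ι) (h4 : G₁.att = G₂.att) : G₁ = G₂ := by
  cases G₁; cases G₂; simp_all

private lemma gmem_delV (G : LegGraph) (v h : ℕ) :
    h ∈ (G.delVertex v).H ↔ h ∈ G.H ∧
      ¬((G.att h = some v ∨ G.att (G.ι h) = some v) ∧
        (G.att h = some v ∨ G.att h = none) ∧
        (G.att (G.ι h) = some v ∨ G.att (G.ι h) = none)) := by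
  simp [LegGraph.delVertex, Finset.mem_filter]

private lemma gdelV_i (G : LegGraph) (v h : ℕ) (hm : h ∈ (G.delVertex v).H) :
    (G.delVertex v).ι h = G.ι h := by
  simp only [LegGraph.delVertex] at hm ⊢
  rw [if_pos hm]

private lemma gdelV_att (G : LegGraph) (v h : ℕ) (hm : h ∈ (G.delVertex v).H) :
    (G.delVertex v).att h = if G.att h = some v then none else G.att h := by
  simp only [LegGraph.delVertex] at hm ⊢
  rw [if_pos hm]

private lemma gdelV_i_not (G : LegGraph) (v h : ℕ) (hm : h ∉ (G.delVertex v).H) :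
    (G.delVertex v).ι h = h := by
  simp only [LegGraph.delVertex] at hm ⊢
  rw [if_neg hm]

private lemma gdelV_att_not (G : LegGraph) (v h : ℕ) (hm : h ∉ (G.delVertex v).H) :
    (G.delVertex v).att h = none := by
  simp only [LegGraph.delVertex] at hm ⊢
  rw [if_neg hm]

private lemma prop_equiv {av aw an bv bw bn : Prop}
    (hrv : ¬((av ∨ bv) ∧ (av ∨ an) ∧ (bv ∨ bn))) :
    ((aw ∨ bw) ∧ (aw ∨ (an ∨ av)) ∧ (bw ∨ (bn ∨ bv))) ↔
      (((av ∨ aw) ∨ an) ∧ ((bv ∨ bw) ∨ bn) ∧ ((av ∨ aw) ∨ (bv ∨ bw))) := by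
  tauto

private lemma prop_rv {av aw an bv bw bn : Prop}
    (hrv : (av ∨ bv) ∧ (av ∨ an) ∧ (bv ∨ bn)) :
    ((av ∨ aw) ∨ an) ∧ ((bv ∨ bw) ∨ bn) ∧ ((av ∨ aw) ∨ (bv ∨ bw)) := by
  tauto

/-- Let `v` be an outer vertex and `e` a (non-loop) inner edge
adjacent to `v`, with `w` the vertex at its other end, so that contracting `e`
merges `v` and `w` into the single vertex `u = min v w` of `G/e`.  Then the
outer face `(G/e)/u` exists (i.e. `u` is an outer vertex of `G/e`) if and only
if `(G/v)/w` exists (i.e. `w` is an outer vertex of `G/v`); in that case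
`(G/e)/u = (G/v)/w` and the square commutes: `δ^e ∘ δ^u = δ^v ∘ δ^w` as
graphical maps `(G/e)/u → G`. -/
theorem inner_outer_adjacent (G : LegGraph) (hG : G.Wf) (v w e : ℕ)
    (hv : G.IsOuterVertex v) (he : G.IsInnerEdge e) (hl : ¬ G.IsLoop e)
    (hev : G.att e = some v) (hew : G.att (G.ι e) = some w) (hvw : v ≠ w) :
    ((G.contract e).IsOuterVertex (min v w) ↔ (G.delVertex v).IsOuterVertex w) ∧
    ((G.contract e).IsOuterVertex (min v w) →
      ((G.contract e).delVertex (min v w) = (G.delVertex v).delVertex w ∧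
       PreGMap.EqOn ((G.contract e).delVertex (min v w))
         ((G.innerCoface e).comp ((G.contract e).outerCoface (min v w)))
         ((G.outerCoface v).comp ((G.delVertex v).outerCoface w)))) := by
  classical
  obtain ⟨hiH, hinv, hattV, -⟩ := hG
  obtain ⟨heH, hee, -, -⟩ := he
  have hieH : G.ι e ∈ G.H := hiH e heH
  have hwV : w ∈ G.V := hattV _ hieH _ hew
  have hvV : v ∈ G.V := hv.1
  have huvw : min v w = v ∨ min v w = w := min_choice v w
  have hiie : G.ι (G.ι e) = e := hinv e heH
  -- consequences of outerness of v
  have hcount := hv.2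
  unfold LegGraph.nonLegEdgeCount at hcount
  set A := G.H.filter fun h => G.att h = some v ∧ (G.att (G.ι h)).isSome ∧ G.att (G.ι h) ≠ some v with hA
  set B := G.H.filter fun h => G.att h = some v ∧ G.att (G.ι h) = some v ∧ h ≠ G.ι h with hB
  have heA : e ∈ A := by
    rw [hA, Finset.mem_filter]
    refine ⟨heH, hev, by simp [hew], by simp [hew, (Ne.symm hvw)]⟩
  have hA1 : A.card ≤ 1 := le_trans (Nat.le_add_right _ _) hcount
  have hB1 : B.card ≤ 1 := by
    have := Finset.card_pos.mpr ⟨e, heA⟩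
    omega
  have hne : ∀ h ∈ G.H, G.att h = some v → (G.att (G.ι h)).isSome →
      G.att (G.ι h) ≠ some v → h = e := by
    intro h hh h1 h2 h3
    exact Finset.card_le_one.mp hA1 h (Finset.mem_filter.mpr ⟨hh, h1, h2, h3⟩) e heA
  have hloop : ∀ h ∈ G.H, G.att h = some v → G.att (G.ι h) = some v → G.ι h = h := by
    intro h hh h1 h2
    by_contra hne'
    have hhB : h ∈ B := Finset.mem_filter.mpr ⟨hh, h1, h2, fun x => hne' x.symm⟩
    have hiB : G.ι h ∈ B := by
      refine Finset.mem_filter.mpr ⟨hiH h hh, h2, ?_, ?_⟩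
      · rw [hinv h hh]; exact h1
      · rw [hinv h hh]; exact fun x => hne' x
    exact hne' ((Finset.card_le_one.mp hB1 (G.ι h) hiB h hhB))
  have hKey : ∀ h ∈ G.H, G.att h = some v → h ≠ e →
      G.att (G.ι h) = none ∨ (G.att (G.ι h) = some v ∧ G.ι h = h) := by
    intro h hh h1 h2
    rcases hx : G.att (G.ι h) with _ | z
    · exact Or.inl rfl
    · by_cases hz : z = v
      · subst hz; exact Or.inr ⟨rfl, hloop h hh h1 hx⟩
      · exact absurd (hne h hh h1 (by simp [hx]) (by simp [hx, hz])) h2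
  -- basic facts about ι
  have hinj : ∀ h ∈ G.H, G.ι h = G.ι e → h = e := by
    intro h hh hx
    have := hinv h hh
    rw [hx, hiie] at this
    exact this.symm
  have hinj' : ∀ h ∈ G.H, G.ι h = e → h = G.ι e := by
    intro h hh hx
    have := hinv h hh
    rw [hx] at this
    exact this.symm
  -- characterization of contract
  have hCmem : ∀ h, h ∈ (G.contract e).H ↔ h ∈ G.H ∧ h ≠ e ∧ h ≠ G.ι e := by
    intro h
    simp [LegGraph.contract, Finset.mem_filter]
  have hCi : ∀ h ∈ G.H, h ≠ e → h ≠ G.ι e → (G.contract e).ι h = G.ι h := by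
    intro h h1 h2 h3
    simp [LegGraph.contract, Finset.mem_filter, h1, h2, h3]
  have hCatt : ∀ h ∈ G.H, h ≠ e → h ≠ G.ι e → (G.contract e).att h =
      if G.att h = some v ∨ G.att h = some w then some (min v w) else G.att h := by
    intro h h1 h2 h3
    simp [LegGraph.contract, Finset.mem_filter, h1, h2, h3, hev, hew]
  have hCclosed : ∀ h ∈ G.H, h ≠ e → h ≠ G.ι e →
      (G.ι h ∈ G.H ∧ G.ι h ≠ e ∧ G.ι h ≠ G.ι e) := by
    intro h h1 h2 h3
    exact ⟨hiH h h1, fun hx => h3 (hinj' h h1 hx), fun hx => h2 (hinj h h1 hx)⟩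
  -- characterization of delVertex
  have hVmem : ∀ h, h ∈ (G.delVertex v).H ↔ h ∈ G.H ∧
      ¬((G.att h = some v ∨ G.att (G.ι h) = some v) ∧
        (G.att h = some v ∨ G.att h = none) ∧
        (G.att (G.ι h) = some v ∨ G.att (G.ι h) = none)) := by
    intro h
    simp [LegGraph.delVertex, Finset.mem_filter]
  have hVi : ∀ h, h ∈ (G.delVertex v).H → (G.delVertex v).ι h = G.ι h := by
    intro h h1
    rw [hVmem] at h1
    simp [LegGraph.delVertex, Finset.mem_filter, h1.1, h1.2]
    tauto
  have hVatt : ∀ h, h ∈ (G.delVertex v).H → (G.delVertex v).att h =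
      if G.att h = some v then none else G.att h := by
    intro h h1
    rw [hVmem] at h1
    simp [LegGraph.delVertex, Finset.mem_filter, h1.1, h1.2]
    intro ha hb hc
    exfalso
    apply h1.2
    refine ⟨ha, hb, ?_⟩
    by_cases hx : G.att (G.ι h) = some v
    exacts [Or.inl hx, Or.inr (hc hx)]
  have hVclosed : ∀ h, h ∈ (G.delVertex v).H → G.ι h ∈ (G.delVertex v).H := by
    intro h h1
    obtain ⟨hh, hc⟩ := (hVmem h).mp h1
    refine (hVmem (G.ι h)).mpr ⟨hiH h hh, fun hc' => hc ?_⟩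
    rw [hinv h hh] at hc'
    exact ⟨hc'.1.symm, hc'.2.2, hc'.2.1⟩
  -- handy inequality facts
  have hsu : ∀ z : ℕ, z ≠ v → z ≠ w → some z ≠ some (min v w) := by
    intro z h1 h2 hc
    injection hc with hc
    rcases huvw with h | h <;> rw [h] at hc
    exacts [h1 hc, h2 hc]
  have hnesw : ∀ o : Option ℕ, o.isSome → o ≠ some v → o ≠ some w → o ≠ some (min v w) := by
    intro o ho h1 h2
    rcases huvw with h | h <;> rw [h] <;> assumption
  have hwv : some w ≠ some v := fun hc => hvw (by injection hc with hc; exact hc.symm)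
  -- the non-leg edge filters agree
  have hS1 : (G.contract e).H.filter (fun h => (G.contract e).att h = some (min v w) ∧
        ((G.contract e).att ((G.contract e).ι h)).isSome ∧
        (G.contract e).att ((G.contract e).ι h) ≠ some (min v w)) =
      G.H.filter (fun h => G.att h = some w ∧ (G.att (G.ι h)).isSome ∧
        G.att (G.ι h) ≠ some v ∧ G.att (G.ι h) ≠ some w) := by
    ext h
    simp only [Finset.mem_filter]
    constructor
    · rintro ⟨hmem, h1, h2, h3⟩
      obtain ⟨hh, hne1, hne2⟩ := (hCmem h).mp hmem
      obtain ⟨hih, hine1, hine2⟩ := hCclosed h hh hne1 hne2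
      rw [hCi h hh hne1 hne2] at h2 h3
      rw [hCatt h hh hne1 hne2] at h1
      rw [hCatt (G.ι h) hih hine1 hine2] at h2 h3
      have hhw : G.att h = some w := by
        by_cases hc : G.att h = some v ∨ G.att h = some w
        · rcases hc with hc | hc
          · exfalso
            rcases hKey h hh hc hne1 with hk | ⟨hk, -⟩ <;> rw [hk] at h2 h3
            · simp at h2
            · rw [if_pos (Or.inl rfl)] at h3; exact h3 rfl
          · exact hc
        · rw [if_neg hc] at h1
          push_neg at hc
          rcases huvw with hx | hx <;> rw [hx] at h1
          exacts [absurd h1 hc.1, absurd h1 hc.2]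
      have hiv : G.att (G.ι h) ≠ some v := by
        intro hc
        rcases hKey (G.ι h) hih hc hine1 with hk | ⟨hk, -⟩ <;> rw [hinv h hh, hhw] at hk
        · exact absurd hk (by simp)
        · injection hk with hk; exact hvw hk.symm
      have hiw : G.att (G.ι h) ≠ some w := by
        intro hc
        rw [if_pos (Or.inr hc)] at h3
        exact h3 rfl
      rw [if_neg (not_or.mpr ⟨hiv, hiw⟩)] at h2
      exact ⟨hh, hhw, h2, hiv, hiw⟩
    · rintro ⟨hh, h1, h2, h3, h4⟩
      have hne1 : h ≠ e := by intro hc; rw [hc, hev] at h1; exact hwv h1.symm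
      have hne2 : h ≠ G.ι e := by
        intro hc; apply h3; rw [hc, hiie, hev]
      obtain ⟨hih, hine1, hine2⟩ := hCclosed h hh hne1 hne2
      refine ⟨(hCmem h).mpr ⟨hh, hne1, hne2⟩, ?_, ?_, ?_⟩
      · rw [hCatt h hh hne1 hne2, if_pos (Or.inr h1)]
      · rw [hCi h hh hne1 hne2, hCatt (G.ι h) hih hine1 hine2,
          if_neg (not_or.mpr ⟨h3, h4⟩)]
        exact h2
      · rw [hCi h hh hne1 hne2, hCatt (G.ι h) hih hine1 hine2,
          if_neg (not_or.mpr ⟨h3, h4⟩)]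
        exact hnesw _ h2 h3 h4
  -- and for the deleted-vertex graph
  have hS2 : (G.delVertex v).H.filter (fun h => (G.delVertex v).att h = some w ∧
        ((G.delVertex v).att ((G.delVertex v).ι h)).isSome ∧
        (G.delVertex v).att ((G.delVertex v).ι h) ≠ some w) =
      G.H.filter (fun h => G.att h = some w ∧ (G.att (G.ι h)).isSome ∧
        G.att (G.ι h) ≠ some v ∧ G.att (G.ι h) ≠ some w) := by
    ext h
    simp only [Finset.mem_filter]
    constructor
    · rintro ⟨hmem, h1, h2, h3⟩
      obtain ⟨hh, -⟩ := (hVmem h).mp hmem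
      have hmem' := hVclosed h hmem
      rw [hVi h hmem] at h2 h3
      rw [hVatt h hmem] at h1
      rw [hVatt (G.ι h) hmem'] at h2 h3
      have hhw : G.att h = some w := by
        by_cases hc : G.att h = some v
        · rw [if_pos hc] at h1; exact absurd h1 (by simp)
        · rwa [if_neg hc] at h1
      have hiv : G.att (G.ι h) ≠ some v := by
        intro hc
        rw [if_pos hc] at h2
        exact absurd h2 (by simp)
      rw [if_neg hiv] at h2 h3
      exact ⟨hh, hhw, h2, hiv, h3⟩
    · rintro ⟨hh, h1, h2, h3, h4⟩
      have hw' : G.att h ≠ some v := by rw [h1]; exact hwv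
      have hmem : h ∈ (G.delVertex v).H := by
        refine (hVmem h).mpr ⟨hh, ?_⟩
        rintro ⟨-, hb, -⟩
        rw [h1] at hb
        rcases hb with hb | hb
        exacts [hwv hb, absurd hb (by simp)]
      have hmem' := hVclosed h hmem
      refine ⟨hmem, ?_, ?_, ?_⟩
      · rw [hVatt h hmem, if_neg hw']; exact h1
      · rw [hVi h hmem, hVatt (G.ι h) hmem', if_neg h3]; exact h2
      · rw [hVi h hmem, hVatt (G.ι h) hmem', if_neg h3]; exact h4
  -- the loop filters agree
  have hL1 : (G.contract e).H.filter (fun h => (G.contract e).att h = some (min v w) ∧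
        (G.contract e).att ((G.contract e).ι h) = some (min v w) ∧ h ≠ (G.contract e).ι h) =
      G.H.filter (fun h => G.att h = some w ∧ G.att (G.ι h) = some w ∧ h ≠ G.ι h) := by
    ext h
    simp only [Finset.mem_filter]
    constructor
    · rintro ⟨hmem, h1, h2, h3⟩
      obtain ⟨hh, hne1, hne2⟩ := (hCmem h).mp hmem
      obtain ⟨hih, hine1, hine2⟩ := hCclosed h hh hne1 hne2
      rw [hCi h hh hne1 hne2] at h2 h3
      rw [hCatt h hh hne1 hne2] at h1
      rw [hCatt (G.ι h) hih hine1 hine2] at h2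
      have hhw : G.att h = some w := by
        by_cases hc : G.att h = some v ∨ G.att h = some w
        · rcases hc with hc | hc
          · exfalso
            rcases hKey h hh hc hne1 with hk | ⟨-, hk⟩
            · rw [hk] at h2
              rw [if_neg (by simp)] at h2
              exact absurd h2 (by simp)
            · exact h3 hk.symm
          · exact hc
        · rw [if_neg hc] at h1
          push_neg at hc
          rcases huvw with hx | hx <;> rw [hx] at h1
          exacts [absurd h1 hc.1, absurd h1 hc.2]
      have hiw : G.att (G.ι h) = some w := by
        by_cases hc : G.att (G.ι h) = some v ∨ G.att (G.ι h) = some w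
        · rcases hc with hc | hc
          · exfalso
            rcases hKey (G.ι h) hih hc hine1 with hk | ⟨hk, -⟩ <;>
              rw [hinv h hh, hhw] at hk
            · exact absurd hk (by simp)
            · exact hwv hk
          · exact hc
        · rw [if_neg hc] at h2
          push_neg at hc
          rcases huvw with hx | hx <;> rw [hx] at h2
          exacts [absurd h2 hc.1, absurd h2 hc.2]
      exact ⟨hh, hhw, hiw, h3⟩
    · rintro ⟨hh, h1, h2, h3⟩
      have hne1 : h ≠ e := by intro hc; rw [hc, hev] at h1; exact hwv h1.symm
      have hne2 : h ≠ G.ι e := by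
        intro hc; rw [hc, hiie, hev] at h2; exact hwv h2.symm
      obtain ⟨hih, hine1, hine2⟩ := hCclosed h hh hne1 hne2
      refine ⟨(hCmem h).mpr ⟨hh, hne1, hne2⟩, ?_, ?_, ?_⟩
      · rw [hCatt h hh hne1 hne2, if_pos (Or.inr h1)]
      · rw [hCi h hh hne1 hne2, hCatt (G.ι h) hih hine1 hine2, if_pos (Or.inr h2)]
      · rw [hCi h hh hne1 hne2]; exact h3
  have hL2 : (G.delVertex v).H.filter (fun h => (G.delVertex v).att h = some w ∧
        (G.delVertex v).att ((G.delVertex v).ι h) = some w ∧ h ≠ (G.delVertex v).ι h) =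
      G.H.filter (fun h => G.att h = some w ∧ G.att (G.ι h) = some w ∧ h ≠ G.ι h) := by
    ext h
    simp only [Finset.mem_filter]
    constructor
    · rintro ⟨hmem, h1, h2, h3⟩
      obtain ⟨hh, -⟩ := (hVmem h).mp hmem
      have hmem' := hVclosed h hmem
      rw [hVi h hmem] at h2 h3
      rw [hVatt h hmem] at h1
      rw [hVatt (G.ι h) hmem'] at h2
      have hhw : G.att h = some w := by
        by_cases hc : G.att h = some v
        · rw [if_pos hc] at h1; exact absurd h1 (by simp)
        · rwa [if_neg hc] at h1
      have hiw : G.att (G.ι h) = some w := by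
        by_cases hc : G.att (G.ι h) = some v
        · rw [if_pos hc] at h2; exact absurd h2 (by simp)
        · rwa [if_neg hc] at h2
      exact ⟨hh, hhw, hiw, h3⟩
    · rintro ⟨hh, h1, h2, h3⟩
      have hw' : G.att h ≠ some v := by rw [h1]; exact hwv
      have hiw' : G.att (G.ι h) ≠ some v := by rw [h2]; exact hwv
      have hmem : h ∈ (G.delVertex v).H := by
        refine (hVmem h).mpr ⟨hh, ?_⟩
        rintro ⟨-, hb, -⟩
        rw [h1] at hb
        rcases hb with hb | hb
        exacts [hwv hb, absurd hb (by simp)]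
      have hmem' := hVclosed h hmem
      refine ⟨hmem, ?_, ?_, ?_⟩
      · rw [hVatt h hmem, if_neg hw']; exact h1
      · rw [hVi h hmem, hVatt (G.ι h) hmem', if_neg hiw']; exact h2
      · rw [hVi h hmem]; exact h3
  -- the counts agree
  have hcnt : (G.contract e).nonLegEdgeCount (min v w) = (G.delVertex v).nonLegEdgeCount w := by
    unfold LegGraph.nonLegEdgeCount
    rw [hS1, hS2, hL1, hL2]
  have humem : min v w ∈ (G.contract e).V := by
    simp [LegGraph.contract, hev, hew]
  have hwmem : w ∈ (G.delVertex v).V := by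
    simp only [LegGraph.delVertex]
    exact Finset.mem_erase.mpr ⟨Ne.symm hvw, hwV⟩
  constructor
  · constructor
    · intro h
      exact ⟨hwmem, by rw [← hcnt]; exact h.2⟩
    · intro h
      exact ⟨humem, by rw [hcnt]; exact h.2⟩
  intro houter
  -- translations of atomic statements
  have hCattSu : ∀ h ∈ G.H, h ≠ e → h ≠ G.ι e →
      ((G.contract e).att h = some (min v w) ↔ (G.att h = some v ∨ G.att h = some w)) := by
    intro h hh h1 h2
    rw [hCatt h hh h1 h2]
    by_cases hc : G.att h = some v ∨ G.att h = some w
    · rw [if_pos hc]; exact iff_of_true rfl hc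
    · rw [if_neg hc]
      refine iff_of_false ?_ hc
      push_neg at hc
      rcases huvw with hx | hx <;> rw [hx]
      exacts [hc.1, hc.2]
  have hCattNone : ∀ h ∈ G.H, h ≠ e → h ≠ G.ι e →
      ((G.contract e).att h = none ↔ G.att h = none) := by
    intro h hh h1 h2
    rw [hCatt h hh h1 h2]
    by_cases hc : G.att h = some v ∨ G.att h = some w
    · rw [if_pos hc]
      refine iff_of_false (by simp) (fun hn => ?_)
      rw [hn] at hc
      rcases hc with hc | hc <;> exact absurd hc (by simp)
    · rw [if_neg hc]
  have hVattW : ∀ h, h ∈ (G.delVertex v).H →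
      ((G.delVertex v).att h = some w ↔ G.att h = some w) := by
    intro h hm
    rw [hVatt h hm]
    by_cases hc : G.att h = some v
    · rw [if_pos hc]
      refine iff_of_false (by simp) (fun hn => ?_)
      rw [hn] at hc
      exact hwv hc
    · rw [if_neg hc]
  have hVattN : ∀ h, h ∈ (G.delVertex v).H →
      ((G.delVertex v).att h = none ↔ (G.att h = none ∨ G.att h = some v)) := by
    intro h hm
    rw [hVatt h hm]
    by_cases hc : G.att h = some v
    · rw [if_pos hc]; exact iff_of_true rfl (Or.inr hc)
    · rw [if_neg hc]
      constructor
      · exact Or.inl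
      · rintro (hx | hx)
        exacts [hx, absurd hx hc]
  -- characterization of the half-edges of (G/e)/u
  have hE1 : ∀ h, h ∈ ((G.contract e).delVertex (min v w)).H ↔ (h ∈ G.H ∧
      ¬(((G.att h = some v ∨ G.att h = some w) ∨ G.att h = none) ∧
        ((G.att (G.ι h) = some v ∨ G.att (G.ι h) = some w) ∨ G.att (G.ι h) = none) ∧
        ((G.att h = some v ∨ G.att h = some w) ∨
          (G.att (G.ι h) = some v ∨ G.att (G.ι h) = some w)))) := by
    intro h
    rw [gmem_delV]
    by_cases hh : h ∈ G.H
    · by_cases h1 : h = e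
      · refine iff_of_false (fun x => ((hCmem h).mp x.1).2.1 h1) (fun x => x.2 ?_)
        rw [h1]
        exact ⟨Or.inl (Or.inl hev), Or.inl (Or.inr hew), Or.inl (Or.inl hev)⟩
      · by_cases h2 : h = G.ι e
        · refine iff_of_false (fun x => ((hCmem h).mp x.1).2.2 h2) (fun x => x.2 ?_)
          rw [h2, hiie]
          exact ⟨Or.inl (Or.inr hew), Or.inl (Or.inl hev), Or.inl (Or.inr hew)⟩
        · obtain ⟨hih, hi1, hi2⟩ := hCclosed h hh h1 h2
          rw [hCi h hh h1 h2, hCattSu h hh h1 h2, hCattSu (G.ι h) hih hi1 hi2,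
            hCattNone h hh h1 h2, hCattNone (G.ι h) hih hi1 hi2]
          constructor
          · rintro ⟨-, hr⟩
            exact ⟨hh, fun c => hr ⟨c.2.2, c.1, c.2.1⟩⟩
          · rintro ⟨-, hr⟩
            exact ⟨(hCmem h).mpr ⟨hh, h1, h2⟩, fun r => hr ⟨r.2.1, r.2.2, r.1⟩⟩
    · exact iff_of_false (fun x => hh ((hCmem h).mp x.1).1) (fun x => hh x.1)
  -- characterization of the half-edges of (G/v)/w
  have hE2 : ∀ h, h ∈ ((G.delVertex v).delVertex w).H ↔ (h ∈ G.H ∧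
      ¬(((G.att h = some v ∨ G.att h = some w) ∨ G.att h = none) ∧
        ((G.att (G.ι h) = some v ∨ G.att (G.ι h) = some w) ∨ G.att (G.ι h) = none) ∧
        ((G.att h = some v ∨ G.att h = some w) ∨
          (G.att (G.ι h) = some v ∨ G.att (G.ι h) = some w)))) := by
    intro h
    rw [gmem_delV]
    by_cases hm : h ∈ (G.delVertex v).H
    · obtain ⟨hh, hrv⟩ := (hVmem h).mp hm
      have hm' := hVclosed h hm
      rw [hVi h hm, hVattW h hm, hVattN h hm, hVattW (G.ι h) hm', hVattN (G.ι h) hm']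
      constructor
      · rintro ⟨-, hr⟩
        exact ⟨hh, fun hc => hr ((prop_equiv hrv).mpr hc)⟩
      · rintro ⟨-, hr⟩
        exact ⟨hm, fun hc => hr ((prop_equiv hrv).mp hc)⟩
    · refine iff_of_false (fun x => hm x.1) (fun x => ?_)
      have hrv := not_not.mp (fun hn => hm ((hVmem h).mpr ⟨x.1, hn⟩))
      exact x.2 (prop_rv hrv)
  -- equality of the two outer-face graphs
  have hVeq : ((G.contract e).delVertex (min v w)).V = ((G.delVertex v).delVertex w).V := by
    have hnm : min v w ∉ (G.V.erase v).erase w := by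
      rcases huvw with hx | hx <;> rw [hx] <;> simp [Finset.mem_erase]
    show ((G.contract e).V).erase (min v w) = ((G.delVertex v).V).erase w
    simp only [LegGraph.contract, LegGraph.delVertex, hev, hew, Option.getD_some]
    exact Finset.erase_insert hnm
  have hHeq : ((G.contract e).delVertex (min v w)).H = ((G.delVertex v).delVertex w).H := by
    ext h
    rw [hE1 h, hE2 h]
  have hIeq : ((G.contract e).delVertex (min v w)).ι = ((G.delVertex v).delVertex w).ι := by
    funext h
    by_cases hm : h ∈ ((G.contract e).delVertex (min v w)).H
    · have hm2 : h ∈ ((G.delVertex v).delVertex w).H := by rw [← hHeq]; exact hm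
      rw [gdelV_i _ _ h hm, gdelV_i _ _ h hm2]
      obtain ⟨hmem, -⟩ := (gmem_delV _ _ h).mp hm
      obtain ⟨hmem2, -⟩ := (gmem_delV _ _ h).mp hm2
      obtain ⟨hh, h1, h2⟩ := (hCmem h).mp hmem
      rw [hCi h hh h1 h2, hVi h hmem2]
    · have hm2 : h ∉ ((G.delVertex v).delVertex w).H := by rw [← hHeq]; exact hm
      rw [gdelV_i_not _ _ h hm, gdelV_i_not _ _ h hm2]
  have hAeq : ((G.contract e).delVertex (min v w)).att = ((G.delVertex v).delVertex w).att := by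
    funext h
    by_cases hm : h ∈ ((G.contract e).delVertex (min v w)).H
    · have hm2 : h ∈ ((G.delVertex v).delVertex w).H := by rw [← hHeq]; exact hm
      rw [gdelV_att _ _ h hm, gdelV_att _ _ h hm2]
      obtain ⟨hmem, hncond⟩ := (hE1 h).mp hm
      obtain ⟨hmem1, -⟩ := (gmem_delV _ _ h).mp hm
      obtain ⟨hmem2, -⟩ := (gmem_delV _ _ h).mp hm2
      obtain ⟨hh, h1, h2⟩ := (hCmem h).mp hmem1
      rw [hCatt h hh h1 h2, hVatt h hmem2]
      have hav : G.att h ≠ some v := by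
        intro hc
        apply hncond
        refine ⟨Or.inl (Or.inl hc), ?_, Or.inl (Or.inl hc)⟩
        rcases hKey h hh hc h1 with hk | ⟨hk, -⟩
        · exact Or.inr hk
        · exact Or.inl (Or.inl hk)
      by_cases haw : G.att h = some w
      · rw [if_pos (Or.inr haw), if_neg hav, if_pos rfl, if_pos haw]
      · have hnu : G.att h ≠ some (min v w) := by
          rcases huvw with hx | hx <;> rw [hx]
          exacts [hav, haw]
        rw [if_neg (not_or.mpr ⟨hav, haw⟩), if_neg hnu, if_neg hav, if_neg haw]
    · have hm2 : h ∉ ((G.delVertex v).delVertex w).H := by rw [← hHeq]; exact hm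
      rw [gdelV_att_not _ _ h hm, gdelV_att_not _ _ h hm2]
  refine ⟨graph_ext hVeq hHeq hIeq hAeq, ?_⟩
  refine ⟨fun h _ => rfl, fun z hz => ?_⟩
  obtain ⟨hzu, hzw, hzv, hzV⟩ : z ≠ min v w ∧ z ≠ w ∧ z ≠ v ∧ z ∈ G.V := by
    simp only [LegGraph.delVertex, LegGraph.contract, hev, hew, Option.getD_some,
      Finset.mem_erase, Finset.mem_insert] at hz
    obtain ⟨hz1, hz2⟩ := hz
    rcases hz2 with hx | hx
    exacts [absurd hx hz1, ⟨hz1, hx⟩]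
  have hinner : (G.innerCoface e).vimg z = G.corolla z := by
    simp only [LegGraph.innerCoface, hev, hew, Option.getD_some]
    rw [if_neg hzu]
  have hC1sub : ((G.contract e).corolla z).2 ⊆ (G.corolla z).2 := by
    intro h hmem
    simp only [LegGraph.corolla, Finset.mem_filter] at hmem ⊢
    obtain ⟨hmC, hor⟩ := hmem
    obtain ⟨hh, h1, h2⟩ := (hCmem h).mp hmC
    obtain ⟨hih, hi1, hi2⟩ := hCclosed h hh h1 h2
    rw [hCi h hh h1 h2] at hor
    refine ⟨hh, ?_⟩
    rcases hor with hx | hx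
    · left
      rw [hCatt h hh h1 h2] at hx
      by_cases hc : G.att h = some v ∨ G.att h = some w
      · rw [if_pos hc] at hx
        injection hx with hx
        exact absurd hx.symm hzu
      · rwa [if_neg hc] at hx
    · right
      rw [hCatt (G.ι h) hih hi1 hi2] at hx
      by_cases hc : G.att (G.ι h) = some v ∨ G.att (G.ι h) = some w
      · rw [if_pos hc] at hx
        injection hx with hx
        exact absurd hx.symm hzu
      · rwa [if_neg hc] at hx
  have hC2sub : ((G.delVertex v).corolla z).2 ⊆ (G.corolla z).2 := by
    intro h hmem
    simp only [LegGraph.corolla, Finset.mem_filter] at hmem ⊢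
    obtain ⟨hmV, hor⟩ := hmem
    have hmV' := hVclosed h hmV
    obtain ⟨hh, -⟩ := (hVmem h).mp hmV
    rw [hVi h hmV] at hor
    refine ⟨hh, ?_⟩
    rcases hor with hx | hx
    · left
      rw [hVatt h hmV] at hx
      by_cases hc : G.att h = some v
      · rw [if_pos hc] at hx; exact absurd hx (by simp)
      · rwa [if_neg hc] at hx
    · right
      rw [hVatt (G.ι h) hmV'] at hx
      by_cases hc : G.att (G.ι h) = some v
      · rw [if_pos hc] at hx; exact absurd hx (by simp)
      · rwa [if_neg hc] at hx
  have hcor1 : ((G.contract e).corolla z).1 = {z} := rfl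
  have hcor2 : ((G.delVertex v).corolla z).1 = {z} := rfl
  have hie : (G.innerCoface e).e = id := rfl
  have hL : ((G.innerCoface e).comp ((G.contract e).outerCoface (min v w))).vimg z
      = G.corolla z := by
    simp only [PreGMap.comp, LegGraph.outerCoface]
    rw [hcor1, Finset.singleton_biUnion, Finset.singleton_biUnion, hinner, hie,
      Finset.image_id, Finset.union_eq_right.mpr hC1sub]
  have hR : ((G.outerCoface v).comp ((G.delVertex v).outerCoface w)).vimg z
      = G.corolla z := by
    simp only [PreGMap.comp, LegGraph.outerCoface]
    rw [hcor2, Finset.singleton_biUnion, Finset.singleton_biUnion,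
      Finset.image_id, Finset.union_eq_right.mpr hC2sub]
  rw [hL, hR]
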